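/- Let 0 < α < 1/2 and let σ > 0 satisfy σ² ≥ α(1 − α). Define h(s) = ln(α e^{s(1−α)} + (1−α) e^{−sα}) − σ²s²/2. Then the derivative h′(s) > 0 for every s < 0; in particular, h has no local maximum on (−∞, 0). -/

import Mathlib

open Real

private lemma psi_pos (α : ℝ) (hα₀ : 0 < α) (hα : α < 1 / 2) :
    ∀ s : ℝ, s < 0 → 0 < (1 - s * α) * Real.exp s - 1 - s * (1 - α) := by
  intro s hs
  set ψ : ℝ → ℝ := fun x => (1 - x * α) * Real.exp x - 1 - x * (1 - α) with hψ
  have hderiv : ∀ x : ℝ, HasDerivAt ψ ((1 - α - x * α) * Real.exp x - (1 - α)) x := by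
    intro x
    have h1 : HasDerivAt (fun x : ℝ => (1 - x * α) * Real.exp x)
        ((0 - 1 * α) * Real.exp x + (1 - x * α) * Real.exp x) x :=
      (((hasDerivAt_const x (1:ℝ)).sub ((hasDerivAt_id x).mul_const α)).mul
        (Real.hasDerivAt_exp x))
    have h2 : HasDerivAt (fun x : ℝ => (1 - x * α) * Real.exp x - 1 - x * (1 - α))
        (((0 - 1 * α) * Real.exp x + (1 - x * α) * Real.exp x) - 0 - 1 * (1 - α)) x :=
      (h1.sub (hasDerivAt_const x 1)).sub ((hasDerivAt_id x).mul_const (1 - α))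
    convert h2 using 1
    ring
  have hanti : StrictAntiOn ψ (Set.Iic 0) := by
    apply strictAntiOn_of_deriv_neg (convex_Iic 0)
    · exact Continuous.continuousOn (by fun_prop)
    · intro x hx
      rw [interior_Iic] at hx
      rw [(hderiv x).deriv]
      have hx0 : x < 0 := hx
      have he : 1 - x < Real.exp (-x) := by
        have := Real.add_one_lt_exp (show -x ≠ 0 by intro h; apply hx0.ne; linarith)
        linarith
      have h1 : Real.exp x * (1 - x) < 1 := by
        have := mul_lt_mul_of_pos_left he (Real.exp_pos x)
        rwa [← Real.exp_add, add_neg_cancel, Real.exp_zero] at this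
      nlinarith [Real.exp_pos x, mul_pos (mul_pos (show (0:ℝ) < -x by linarith)
        (show (0:ℝ) < 1 - 2 * α by linarith)) (Real.exp_pos x),
        mul_lt_mul_of_pos_left h1 (show (0:ℝ) < 1 - α by linarith)]
  have h0 : ψ 0 = 0 := by simp [hψ]
  have := hanti (Set.mem_Iic.mpr hs.le) (Set.mem_Iic.mpr le_rfl) hs
  rw [h0] at this
  exact this

/-- `h(s) = ln (α e^{s(1-α)} + (1-α) e^{-sα}) - σ² s² / 2`. -/
noncomputable def hFun (α σ : ℝ) (s : ℝ) : ℝ :=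
  Real.log (α * Real.exp (s * (1 - α)) + (1 - α) * Real.exp (-s * α)) - σ ^ 2 * s ^ 2 / 2

/-- For `0 < α < 1/2` and `σ² ≥ α(1-α)`, the derivative of `h` is positive on `(-∞, 0)`;
in particular `h` has no local maximum there. -/
theorem hFun_deriv_pos_of_neg (α σ : ℝ) (hα₀ : 0 < α) (hα : α < 1 / 2)
    (hσ : 0 < σ) (hσ2 : α * (1 - α) ≤ σ ^ 2) :
    (∀ s : ℝ, s < 0 → 0 < deriv (hFun α σ) s) ∧
    (∀ s : ℝ, s < 0 → ¬ IsLocalMax (hFun α σ) s) := by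
  have h1α : (0:ℝ) < 1 - α := by linarith
  have pos : ∀ s : ℝ, s < 0 → 0 < deriv (hFun α σ) s := by
    intro s hs
    have hgpos : 0 < α * Real.exp (s * (1 - α)) + (1 - α) * Real.exp (-s * α) :=
      add_pos (mul_pos hα₀ (Real.exp_pos _)) (mul_pos h1α (Real.exp_pos _))
    -- derivative of the inner function
    have e1 : HasDerivAt (fun x : ℝ => Real.exp (x * (1 - α)))
        (Real.exp (s * (1 - α)) * (1 * (1 - α))) s :=
      ((hasDerivAt_id s).mul_const (1 - α)).exp
    have e2 : HasDerivAt (fun x : ℝ => Real.exp (-x * α))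
        (Real.exp (-s * α) * (-1 * α)) s :=
      (((hasDerivAt_id s).neg).mul_const α).exp
    have hg' : HasDerivAt (fun x : ℝ => α * Real.exp (x * (1 - α)) + (1 - α) * Real.exp (-x * α))
        (α * (1 - α) * Real.exp (s * (1 - α)) - (1 - α) * α * Real.exp (-s * α)) s := by
      have := (e1.const_mul α).add (e2.const_mul (1 - α))
      exact this.congr_deriv (by ring)
    have hq : HasDerivAt (fun x : ℝ => σ ^ 2 * x ^ 2 / 2) (σ ^ 2 * s) s := by
      have := ((hasDerivAt_pow 2 s).const_mul (σ ^ 2)).div_const 2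
      exact this.congr_deriv (by ring)
    have hF : HasDerivAt (hFun α σ)
        ((α * (1 - α) * Real.exp (s * (1 - α)) - (1 - α) * α * Real.exp (-s * α)) /
          (α * Real.exp (s * (1 - α)) + (1 - α) * Real.exp (-s * α)) - σ ^ 2 * s) s :=
      (hg'.log hgpos.ne').sub hq
    rw [hF.deriv]
    have hpsi := psi_pos α hα₀ hα s hs
    have hsplit : Real.exp (s * (1 - α)) = Real.exp (-s * α) * Real.exp s := by
      rw [← Real.exp_add]; ring_nf
    have hkey : α * (1 - α) * s * (α * Real.exp (s * (1 - α)) + (1 - α) * Real.exp (-s * α)) <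
        α * (1 - α) * Real.exp (s * (1 - α)) - (1 - α) * α * Real.exp (-s * α) := by
      have hE := mul_pos (mul_pos (mul_pos hα₀ h1α) (Real.exp_pos (-s * α))) hpsi
      rw [hsplit]
      nlinarith [hE]
    have h3 : α * (1 - α) * s <
        (α * (1 - α) * Real.exp (s * (1 - α)) - (1 - α) * α * Real.exp (-s * α)) /
          (α * Real.exp (s * (1 - α)) + (1 - α) * Real.exp (-s * α)) :=
      (lt_div_iff₀ hgpos).mpr hkey
    nlinarith [h3, mul_le_mul_of_nonpos_right hσ2 hs.le]
  refine ⟨pos, fun s hs hmax => ?_⟩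
  exact absurd hmax.deriv_eq_zero (pos s hs).ne'
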